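/- Let p₁,…,p_n, q₁,…,q_n ∈ ℝ^d, and define F(r) = min_π (1/n) Σ_i ‖exp([r]) p_i − q_{π(i)}‖² where the minimum is over permutations π and [r] is the skew-symmetric matrix determined by r ∈ ℝ^s. Suppose r* = 0 is a global minimizer of F attained with permutation π*. Then for all r with ‖r‖ ≤ δ: F(r) − F(0) ≤ (2/n) σ_P σ_Q ψ₂(δ), where ψ₂(δ) = e^δ − 1 − δ, σ_P = (Σ_i ‖p_i‖²)^{1/2}, σ_Q = (Σ_i ‖q_i‖²)^{1/2}. -/

import Mathlib

open scoped BigOperators RealInnerProductSpace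
open Matrix

noncomputable def mulVecE {d : ℕ} (A : Matrix (Fin d) (Fin d) ℝ)
    (p : EuclideanSpace ℝ (Fin d)) : EuclideanSpace ℝ (Fin d) :=
  Matrix.toEuclideanLin A p

def bracket {d s : ℕ} (e : {p : Fin d × Fin d // p.2 < p.1} ≃ Fin s)
    (r : EuclideanSpace ℝ (Fin s)) : Matrix (Fin d) (Fin d) ℝ :=
  fun i j =>
    if h : j < i then r (e ⟨(i, j), h⟩)
    else if h' : i < j then -r (e ⟨(j, i), h'⟩) else 0

noncomputable def psi (k : ℕ) (x : ℝ) : ℝ :=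
  Real.exp x - ∑ j ∈ Finset.range k, x ^ j / (Nat.factorial j : ℝ)

/-- The rigid-bijective energy `E(r, π) = (1/n) Σ_i ‖exp([r]) p_i − q_{π(i)}‖²`. -/
noncomputable def Ebi {d s n : ℕ} (e : {p : Fin d × Fin d // p.2 < p.1} ≃ Fin s)
    (p q : Fin n → EuclideanSpace ℝ (Fin d))
    (r : EuclideanSpace ℝ (Fin s)) (π : Equiv.Perm (Fin n)) : ℝ :=
  (1 / (n : ℝ)) * ∑ i, ‖mulVecE (NormedSpace.exp (bracket e r)) (p i) - q (π i)‖ ^ 2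

/- ## Auxiliary lemmas -/

set_option maxHeartbeats 1000000 in
lemma RQ.exp_sub_one_sub_norm_le {𝔸 : Type*} [NormedRing 𝔸] [NormedAlgebra ℝ 𝔸]
    [CompleteSpace 𝔸] (A : 𝔸) :
    ‖NormedSpace.exp A - 1 - A‖ ≤ Real.exp ‖A‖ - 1 - ‖A‖ := by
  open NormedSpace in
  have hs : Summable fun n => (n.factorial⁻¹ : ℝ) • A ^ n := expSeries_summable' (𝕂 := ℝ) A
  have hns2 : Summable fun n => ‖(((n+2).factorial⁻¹ : ℝ)) • A ^ (n+2)‖ :=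
    (summable_nat_add_iff 2).2 (norm_expSeries_summable' (𝕂 := ℝ) A)
  have hs2 : Summable fun n => (((n+2).factorial⁻¹ : ℝ)) • A ^ (n+2) :=
    (summable_nat_add_iff 2).2 hs
  have hexp : exp A = ∑' n, (n.factorial⁻¹ : ℝ) • A ^ n := congrFun (exp_eq_tsum (𝕂 := ℝ)) A
  have hsplit := Summable.sum_add_tsum_nat_add 2 hs
  have hfirst : ∑ i ∈ Finset.range 2, (i.factorial⁻¹ : ℝ) • A ^ i = 1 + A := by
    simp [Finset.sum_range_succ, Nat.factorial]
  have heq : exp A - 1 - A = ∑' n, ((n+2).factorial⁻¹ : ℝ) • A ^ (n+2) := by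
    rw [hexp, ← hsplit, hfirst]; abel
  rw [heq]
  have hrs : Summable fun n => (n.factorial⁻¹ : ℝ) * ‖A‖ ^ n := by
    simpa [div_eq_inv_mul] using Real.summable_pow_div_factorial ‖A‖
  have hrs2 : Summable fun n => ((n+2).factorial⁻¹ : ℝ) * ‖A‖ ^ (n+2) :=
    (summable_nat_add_iff 2).2 hrs
  have hrexp : Real.exp ‖A‖ = ∑' n, (n.factorial⁻¹ : ℝ) * ‖A‖ ^ n := by
    rw [Real.exp_eq_exp_ℝ, congrFun (exp_eq_tsum (𝕂 := ℝ) (𝔸 := ℝ)) ‖A‖]; simp [smul_eq_mul]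
  have hrsplit := Summable.sum_add_tsum_nat_add 2 hrs
  have hrfirst : ∑ i ∈ Finset.range 2, (i.factorial⁻¹ : ℝ) * ‖A‖ ^ i = 1 + ‖A‖ := by
    simp [Finset.sum_range_succ, Nat.factorial]
  have hre : Real.exp ‖A‖ - 1 - ‖A‖ = ∑' n, ((n+2).factorial⁻¹ : ℝ) * ‖A‖ ^ (n+2) := by
    rw [hrexp, ← hrsplit, hrfirst]; abel
  rw [hre]
  calc ‖∑' n, ((n+2).factorial⁻¹ : ℝ) • A ^ (n+2)‖
      ≤ ∑' n, ‖((n+2).factorial⁻¹ : ℝ) • A ^ (n+2)‖ := norm_tsum_le_tsum_norm hns2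
    _ ≤ ∑' n, ((n+2).factorial⁻¹ : ℝ) * ‖A‖ ^ (n+2) := by
        apply Summable.tsum_le_tsum _ hns2 hrs2
        intro n
        rw [norm_smul]
        simp only [norm_inv, Real.norm_natCast]
        have h1 : ‖A ^ (n+2)‖ ≤ ‖A‖ ^ (n+2) := norm_pow_le' A (by omega)
        have h2 : (0:ℝ) ≤ ((n+2).factorial : ℝ)⁻¹ := by positivity
        exact mul_le_mul_of_nonneg_left h1 h2

lemma RQ.bracket_antisymm {d s : ℕ} (e : {p : Fin d × Fin d // p.2 < p.1} ≃ Fin s)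
    (r : EuclideanSpace ℝ (Fin s)) (i j : Fin d) :
    bracket e r j i = - bracket e r i j := by
  unfold bracket
  rcases lt_trichotomy i j with h | h | h
  · rw [dif_pos h, dif_neg (by omega), dif_pos h]; ring
  · subst h; simp
  · rw [dif_neg (by omega), dif_pos h, dif_pos h]

lemma RQ.bracket_smul {d s : ℕ} (e : {p : Fin d × Fin d // p.2 < p.1} ≃ Fin s)
    (t : ℝ) (r : EuclideanSpace ℝ (Fin s)) :
    bracket e (t • r) = t • bracket e r := by
  funext i j
  simp only [bracket, Matrix.smul_apply, PiLp.smul_apply, smul_eq_mul]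
  split_ifs <;> ring

lemma RQ.bracket_zero {d s : ℕ} (e : {p : Fin d × Fin d // p.2 < p.1} ≃ Fin s) :
    bracket e (0 : EuclideanSpace ℝ (Fin s)) = 0 := by
  funext i j
  simp only [bracket]
  split_ifs <;> simp

lemma RQ.lagrange {d : ℕ} (x y : Fin d → ℝ) :
    ∑ p : {p : Fin d × Fin d // p.2 < p.1}, (x p.1.2 * y p.1.1 - x p.1.1 * y p.1.2) ^ 2
      ≤ (∑ i, x i ^ 2) * (∑ i, y i ^ 2) := by
  classical
  set f : Fin d × Fin d → ℝ := fun p => (x p.2 * y p.1 - x p.1 * y p.2) ^ 2 with hf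
  have key : ∀ i : Fin d, ∑ j, f (i, j)
      = (∑ j, x j ^ 2) * y i ^ 2 - (2 * (x i * y i)) * (∑ j, x j * y j)
        + x i ^ 2 * (∑ j, y j ^ 2) := by
    intro i
    have h2 : (∑ j, x j ^ 2) * y i ^ 2 - (2 * (x i * y i)) * (∑ j, x j * y j)
        + x i ^ 2 * (∑ j, y j ^ 2)
        = ∑ j, (x j ^ 2 * y i ^ 2 - 2 * (x i * y i) * (x j * y j) + x i ^ 2 * y j ^ 2) := by
      rw [Finset.sum_add_distrib, Finset.sum_sub_distrib, ← Finset.sum_mul, ← Finset.mul_sum,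
        ← Finset.mul_sum]
    rw [h2]
    exact Finset.sum_congr rfl (fun j _ => by simp only [hf]; ring)
  have hfull : ∑ p : Fin d × Fin d, f p
      = 2 * ((∑ i, x i ^ 2) * (∑ i, y i ^ 2)) - 2 * (∑ i, x i * y i) ^ 2 := by
    rw [Fintype.sum_prod_type]
    calc (∑ i : Fin d, ∑ j : Fin d, f (i, j))
        = ∑ i : Fin d, ((∑ j, x j ^ 2) * y i ^ 2 - (2 * (x i * y i)) * (∑ j, x j * y j)
            + x i ^ 2 * (∑ j, y j ^ 2)) := Finset.sum_congr rfl (fun i _ => key i)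
      _ = (∑ j, x j ^ 2) * (∑ i, y i ^ 2) - 2 * ((∑ j, x j * y j) * (∑ i, x i * y i))
            + (∑ i, x i ^ 2) * (∑ j, y j ^ 2) := by
          rw [Finset.sum_add_distrib, Finset.sum_sub_distrib, ← Finset.mul_sum, ← Finset.sum_mul,
            ← Finset.sum_mul]
          have h3 : ∑ i : Fin d, 2 * (x i * y i) = 2 * ∑ i, x i * y i := by
            rw [Finset.mul_sum]
          rw [h3]; ring
      _ = _ := by ring
  have hdiag : ∀ p : Fin d × Fin d, p.1 = p.2 → f p = 0 := by
    intro p h; simp only [hf, ← h]; ring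
  have hswap : ∀ p : Fin d × Fin d, f p.swap = f p := by
    intro p; simp only [hf, Prod.fst_swap, Prod.snd_swap]; ring
  have hsplit : ∑ p : Fin d × Fin d, f p
      = ∑ p ∈ Finset.univ.filter (fun p : Fin d × Fin d => p.2 < p.1), f p
        + ∑ p ∈ Finset.univ.filter (fun p : Fin d × Fin d => ¬ p.2 < p.1), f p :=
    (Finset.sum_filter_add_sum_filter_not _ _ _).symm
  have hsub : ∑ p ∈ Finset.univ.filter (fun p : Fin d × Fin d => ¬ p.2 < p.1), f p
      = ∑ p ∈ Finset.univ.filter (fun p : Fin d × Fin d => p.1 < p.2), f p := by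
    symm
    apply Finset.sum_subset
    · intro p hp
      simp only [Finset.mem_filter, Finset.mem_univ, true_and] at hp ⊢
      omega
    · intro p hp hnp
      simp only [Finset.mem_filter, Finset.mem_univ, true_and] at hp hnp
      exact hdiag p (by omega)
  have hswapsum : ∑ p ∈ Finset.univ.filter (fun p : Fin d × Fin d => p.1 < p.2), f p
      = ∑ p ∈ Finset.univ.filter (fun p : Fin d × Fin d => p.2 < p.1), f p := by
    apply Finset.sum_nbij' (fun p => p.swap) (fun p => p.swap)
    · intro p hp; simp only [Finset.mem_filter, Finset.mem_univ, true_and] at hp ⊢; simpa using hp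
    · intro p hp; simp only [Finset.mem_filter, Finset.mem_univ, true_and] at hp ⊢; simpa using hp
    · intro p _; simp
    · intro p _; simp
    · intro p _; exact (hswap p).symm
  have hsubty : ∑ p ∈ Finset.univ.filter (fun p : Fin d × Fin d => p.2 < p.1), f p
      = ∑ p : {p : Fin d × Fin d // p.2 < p.1}, f p.val :=
    Finset.sum_subtype _ (by simp) f
  have h2 : 2 * (∑ p : {p : Fin d × Fin d // p.2 < p.1}, f p.val)
      = ∑ p : Fin d × Fin d, f p := by
    rw [hsplit, hsub, hswapsum, ← hsubty]; ring
  have hsq : (0:ℝ) ≤ (∑ i, x i * y i) ^ 2 := sq_nonneg _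
  nlinarith [hfull ▸ h2]

lemma RQ.sum_antisymm {d : ℕ} (M : Matrix (Fin d) (Fin d) ℝ) (hM : ∀ i j, M j i = -M i j)
    (x y : Fin d → ℝ) :
    ∑ i, ∑ j, M i j * x j * y i
      = ∑ p : {p : Fin d × Fin d // p.2 < p.1},
          M p.1.1 p.1.2 * (x p.1.2 * y p.1.1 - x p.1.1 * y p.1.2) := by
  classical
  have hdiag : ∀ i, M i i = 0 := by
    intro i; have := hM i i; linarith
  set g : Fin d × Fin d → ℝ := fun p => M p.1 p.2 * x p.2 * y p.1 with hg
  have h1 : ∑ i, ∑ j, M i j * x j * y i = ∑ p : Fin d × Fin d, g p := by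
    rw [Fintype.sum_prod_type]
  rw [h1]
  have hsplit : ∑ p : Fin d × Fin d, g p
      = ∑ p ∈ Finset.univ.filter (fun p : Fin d × Fin d => p.2 < p.1), g p
        + ∑ p ∈ Finset.univ.filter (fun p : Fin d × Fin d => ¬ p.2 < p.1), g p :=
    (Finset.sum_filter_add_sum_filter_not _ _ _).symm
  have hsub : ∑ p ∈ Finset.univ.filter (fun p : Fin d × Fin d => ¬ p.2 < p.1), g p
      = ∑ p ∈ Finset.univ.filter (fun p : Fin d × Fin d => p.1 < p.2), g p := by
    symm
    apply Finset.sum_subset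
    · intro p hp
      simp only [Finset.mem_filter, Finset.mem_univ, true_and] at hp ⊢
      omega
    · intro p hp hnp
      simp only [Finset.mem_filter, Finset.mem_univ, true_and] at hp hnp
      have : p.1 = p.2 := by omega
      simp only [hg, this, hdiag]; ring
  have hswapsum : ∑ p ∈ Finset.univ.filter (fun p : Fin d × Fin d => p.1 < p.2), g p
      = ∑ p ∈ Finset.univ.filter (fun p : Fin d × Fin d => p.2 < p.1),
          (- (M p.1 p.2 * x p.1 * y p.2)) := by
    apply Finset.sum_nbij' (fun p => p.swap) (fun p => p.swap)
    · intro p hp; simp only [Finset.mem_filter, Finset.mem_univ, true_and] at hp ⊢; simpa using hp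
    · intro p hp; simp only [Finset.mem_filter, Finset.mem_univ, true_and] at hp ⊢; simpa using hp
    · intro p _; simp
    · intro p _; simp
    · intro p _
      simp only [hg, Prod.fst_swap, Prod.snd_swap, hM p.2 p.1]
      ring
  have hsubty : ∀ (F : Fin d × Fin d → ℝ),
      ∑ p ∈ Finset.univ.filter (fun p : Fin d × Fin d => p.2 < p.1), F p
        = ∑ p : {p : Fin d × Fin d // p.2 < p.1}, F p.val := by
    intro F
    exact Finset.sum_subtype _ (by simp) F
  rw [hsplit, hsub, hswapsum, ← Finset.sum_add_distrib, hsubty]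
  apply Finset.sum_congr rfl
  intro p _
  ring

lemma RQ.inner_toEuclideanCLM {d : ℕ} (M : Matrix (Fin d) (Fin d) ℝ)
    (x y : EuclideanSpace ℝ (Fin d)) :
    (inner ℝ (toEuclideanCLM (𝕜 := ℝ) M x) y : ℝ) = ∑ i, (∑ j, M i j * x j) * y i := by
  have happ : ∀ i, (toEuclideanCLM (𝕜 := ℝ) M x) i = ∑ j, M i j * x j := by
    intro i
    have := congrFun (ofLp_toEuclideanCLM (𝕜 := ℝ) M x) i
    simpa [Matrix.mulVec, dotProduct] using this
  simp only [PiLp.inner_apply, RCLike.inner_apply, conj_trivial, happ]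
  exact Finset.sum_congr rfl (fun i _ => mul_comm _ _)

lemma RQ.inner_bracket {d s : ℕ} (e : {p : Fin d × Fin d // p.2 < p.1} ≃ Fin s)
    (r : EuclideanSpace ℝ (Fin s)) (x y : EuclideanSpace ℝ (Fin d)) :
    (inner ℝ (toEuclideanCLM (𝕜 := ℝ) (bracket e r) x) y : ℝ)
      = ∑ p : {p : Fin d × Fin d // p.2 < p.1},
          r (e p) * (x p.1.2 * y p.1.1 - x p.1.1 * y p.1.2) := by
  rw [RQ.inner_toEuclideanCLM]
  have h1 : ∑ i, (∑ j, bracket e r i j * x j) * y i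
      = ∑ i, ∑ j, bracket e r i j * x j * y i := by
    apply Finset.sum_congr rfl; intro i _; rw [Finset.sum_mul]
  rw [h1, RQ.sum_antisymm (bracket e r) (RQ.bracket_antisymm e r) x y]
  apply Finset.sum_congr rfl
  intro p _
  have hb : bracket e r p.1.1 p.1.2 = r (e p) := by
    show (if h : p.1.2 < p.1.1 then r (e ⟨(p.1.1, p.1.2), h⟩)
      else if h' : p.1.1 < p.1.2 then -r (e ⟨(p.1.2, p.1.1), h'⟩) else 0) = r (e p)
    rw [dif_pos p.2]
  rw [hb]

lemma RQ.sum_mul_le_sqrt {ι : Type*} [Fintype ι] (f g : ι → ℝ) :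
    ∑ i, f i * g i ≤ Real.sqrt (∑ i, f i ^ 2) * Real.sqrt (∑ i, g i ^ 2) := by
  have h := Finset.sum_mul_sq_le_sq_mul_sq Finset.univ f g
  have h1 : ∑ i, f i * g i ≤ |∑ i, f i * g i| := le_abs_self _
  have h2 : |∑ i, f i * g i| = Real.sqrt ((∑ i, f i * g i) ^ 2) := (Real.sqrt_sq_eq_abs _).symm
  have h3 : Real.sqrt ((∑ i, f i * g i) ^ 2)
      ≤ Real.sqrt ((∑ i, f i ^ 2) * (∑ i, g i ^ 2)) := Real.sqrt_le_sqrt h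
  have h4 : Real.sqrt ((∑ i, f i ^ 2) * (∑ i, g i ^ 2))
      = Real.sqrt (∑ i, f i ^ 2) * Real.sqrt (∑ i, g i ^ 2) :=
    Real.sqrt_mul (by positivity) _
  linarith [h2 ▸ h1, h4 ▸ h3]

lemma RQ.opnorm_bracket {d s : ℕ} (e : {p : Fin d × Fin d // p.2 < p.1} ≃ Fin s)
    (r : EuclideanSpace ℝ (Fin s)) :
    ‖toEuclideanCLM (𝕜 := ℝ) (bracket e r)‖ ≤ ‖r‖ := by
  apply ContinuousLinearMap.opNorm_le_bound _ (norm_nonneg r)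
  intro x
  set A := toEuclideanCLM (𝕜 := ℝ) (bracket e r)
  set y := A x with hy
  have hxn : ‖x‖ = Real.sqrt (∑ i, (x i) ^ 2) := by
    rw [EuclideanSpace.norm_eq]
    congr 1; apply Finset.sum_congr rfl; intro i _; rw [Real.norm_eq_abs, sq_abs]
  have hyn : ‖y‖ = Real.sqrt (∑ i, (y i) ^ 2) := by
    rw [EuclideanSpace.norm_eq]
    congr 1; apply Finset.sum_congr rfl; intro i _; rw [Real.norm_eq_abs, sq_abs]
  have hinner : ‖y‖ ^ 2 = (inner ℝ (A x) y : ℝ) := by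
    rw [← hy, real_inner_self_eq_norm_sq]
  rw [RQ.inner_bracket] at hinner
  -- bound the sum by Cauchy-Schwarz over the subtype index
  have hrn : ‖r‖ = Real.sqrt (∑ p : {p : Fin d × Fin d // p.2 < p.1}, (r (e p)) ^ 2) := by
    rw [EuclideanSpace.norm_eq]
    congr 1
    rw [← Equiv.sum_comp e (fun k => ‖r k‖ ^ 2)]
    apply Finset.sum_congr rfl; intro p _; rw [Real.norm_eq_abs, sq_abs]
  have hCS : ∑ p : {p : Fin d × Fin d // p.2 < p.1},
        r (e p) * (x p.1.2 * y p.1.1 - x p.1.1 * y p.1.2)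
      ≤ ‖r‖ * (‖x‖ * ‖y‖) := by
    have h1 := RQ.sum_mul_le_sqrt (fun p : {p : Fin d × Fin d // p.2 < p.1} => r (e p))
      (fun p => x p.1.2 * y p.1.1 - x p.1.1 * y p.1.2)
    have h2 : Real.sqrt (∑ p : {p : Fin d × Fin d // p.2 < p.1},
        (x p.1.2 * y p.1.1 - x p.1.1 * y p.1.2) ^ 2) ≤ ‖x‖ * ‖y‖ := by
      rw [hxn, hyn, ← Real.sqrt_mul (by positivity)]
      exact Real.sqrt_le_sqrt (RQ.lagrange x y)
    calc ∑ p : {p : Fin d × Fin d // p.2 < p.1},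
          r (e p) * (x p.1.2 * y p.1.1 - x p.1.1 * y p.1.2)
        ≤ Real.sqrt (∑ p : {p : Fin d × Fin d // p.2 < p.1}, (r (e p)) ^ 2) *
            Real.sqrt (∑ p : {p : Fin d × Fin d // p.2 < p.1},
              (x p.1.2 * y p.1.1 - x p.1.1 * y p.1.2) ^ 2) := h1
      _ ≤ ‖r‖ * (‖x‖ * ‖y‖) := by
          rw [← hrn]
          exact mul_le_mul_of_nonneg_left h2 (norm_nonneg r)
  have hfinal : ‖y‖ ^ 2 ≤ ‖r‖ * (‖x‖ * ‖y‖) := by rw [hinner]; exact hCS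
  rcases eq_or_lt_of_le (norm_nonneg y) with h0 | h0
  · rw [← h0]
    positivity
  · have := (mul_le_mul_iff_left₀ h0).1 (by nlinarith : ‖y‖ * ‖y‖ ≤ (‖r‖ * ‖x‖) * ‖y‖)
    exact this


lemma RQ.toCLM_exp (M : Matrix (Fin d) (Fin d) ℝ) :
    toEuclideanCLM (𝕜 := ℝ) (NormedSpace.exp M)
      = NormedSpace.exp (toEuclideanCLM (𝕜 := ℝ) M) := by
  letI : SeminormedRing (Matrix (Fin d) (Fin d) ℝ) := Matrix.linftyOpSemiNormedRing
  letI : NormedRing (Matrix (Fin d) (Fin d) ℝ) := Matrix.linftyOpNormedRing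
  letI : NormedAlgebra ℝ (Matrix (Fin d) (Fin d) ℝ) := Matrix.linftyOpNormedAlgebra
  letI : NormedAlgebra ℚ (Matrix (Fin d) (Fin d) ℝ) := NormedAlgebra.restrictScalars ℚ ℝ _
  have hc : Continuous (toEuclideanCLM (𝕜 := ℝ) (n := Fin d)) := by
    let L : Matrix (Fin d) (Fin d) ℝ →ₗ[ℝ]
        (EuclideanSpace ℝ (Fin d) →L[ℝ] EuclideanSpace ℝ (Fin d)) :=
      { toFun := fun A => toEuclideanCLM (𝕜 := ℝ) A
        map_add' := by intro a b; exact map_add _ a b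
        map_smul' := by intro c a; exact map_smul _ c a }
    exact L.continuous_of_finiteDimensional
  exact NormedSpace.map_exp (toEuclideanCLM (𝕜 := ℝ) (n := Fin d)) hc M

lemma RQ.star_skew {s : ℕ} (e : {p : Fin d × Fin d // p.2 < p.1} ≃ Fin s)
    (r : EuclideanSpace ℝ (Fin s)) :
    star (toEuclideanCLM (𝕜 := ℝ) (bracket e r))
      = -(toEuclideanCLM (𝕜 := ℝ) (bracket e r)) := by
  rw [← map_star, ← map_neg]
  congr 1
  funext i j
  rw [Matrix.star_apply, Matrix.neg_apply]
  show star (bracket e r j i) = _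
  rw [star_trivial]
  exact RQ.bracket_antisymm e r i j

lemma RQ.exp_skew_isometry (A : EuclideanSpace ℝ (Fin d) →L[ℝ] EuclideanSpace ℝ (Fin d))
    (hA : star A = -A) (v : EuclideanSpace ℝ (Fin d)) :
    ‖NormedSpace.exp A v‖ = ‖v‖ := by
  have h1 : star (NormedSpace.exp A) * NormedSpace.exp A = 1 := by
    rw [NormedSpace.star_exp, hA, ← NormedSpace.exp_add_of_commute_of_mem_ball (𝕂 := ℝ)
      (Commute.neg_left (Commute.refl A)) (by simp [NormedSpace.expSeries_radius_eq_top])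
      (by simp [NormedSpace.expSeries_radius_eq_top])]
    simp [NormedSpace.exp_zero]
  set U := NormedSpace.exp A
  have h2 : (inner ℝ (U v) (U v) : ℝ) = inner ℝ v v := by
    have h3 : (inner ℝ ((ContinuousLinearMap.adjoint U) (U v)) v : ℝ) = inner ℝ (U v) (U v) :=
      ContinuousLinearMap.adjoint_inner_left U v (U v)
    have h4 : (ContinuousLinearMap.adjoint U) (U v) = (star U * U) v := by
      rw [ContinuousLinearMap.star_eq_adjoint]; rfl
    rw [← h3, h4, h1]
    rfl
  have h5 : ‖U v‖ ^ 2 = ‖v‖ ^ 2 := by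
    rw [← real_inner_self_eq_norm_sq, ← real_inner_self_eq_norm_sq, h2]
  nlinarith [norm_nonneg (U v), norm_nonneg v]

lemma RQ.psi2_nonneg {x : ℝ} (hx : 0 ≤ x) : 0 ≤ Real.exp x - 1 - x := by
  nlinarith [Real.add_one_le_exp x]

lemma RQ.psi2_mono {a b : ℝ} (ha : 0 ≤ a) (hab : a ≤ b) :
    Real.exp a - 1 - a ≤ Real.exp b - 1 - b := by
  have h1 : Real.exp b = Real.exp a * Real.exp (b - a) := by
    rw [← Real.exp_add]; ring_nf
  nlinarith [Real.add_one_le_exp (b - a), Real.add_one_le_exp a]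

lemma RQ.psi2_le_sq {x : ℝ} (h0 : 0 ≤ x) (h1 : x ≤ 1) : Real.exp x - 1 - x ≤ x ^ 2 := by
  have h := Real.exp_bound (x := x) (by rw [abs_of_nonneg h0]; exact h1) (n := 2) (by norm_num)
  have h2 : ∑ m ∈ Finset.range 2, x ^ m / (m.factorial : ℝ) = 1 + x := by
    simp [Finset.sum_range_succ, Nat.factorial]
  rw [h2, abs_of_nonneg h0] at h
  have h3 : |Real.exp x - (1 + x)| ≤ x ^ 2 * (3 / 4) := by
    convert h using 2
    norm_num [Nat.factorial]
  have h4 := abs_le.1 h3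
  nlinarith [sq_nonneg x]


set_option maxHeartbeats 1000000 in
/-- Quasi-lower bound for the rigid-bijective problem at a global minimizer `r* = 0`:
if `(0, π*)` globally minimizes `E`, then for all `r` with `‖r‖ ≤ δ`,
`F(r) − F(0) ≤ (2/n) σ_P σ_Q ψ₂(δ)` where `F(r) = min_π E(r, π)`. -/
theorem rigid_bijective_quasi_lower_bound
    {d s n : ℕ} (hn : 0 < n)
    (e : {p : Fin d × Fin d // p.2 < p.1} ≃ Fin s)
    (p q : Fin n → EuclideanSpace ℝ (Fin d))
    (πstar : Equiv.Perm (Fin n))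
    (hmin : ∀ (r : EuclideanSpace ℝ (Fin s)) (π : Equiv.Perm (Fin n)),
      Ebi e p q 0 πstar ≤ Ebi e p q r π)
    (δ : ℝ) (hδ : 0 ≤ δ) :
    ∀ r : EuclideanSpace ℝ (Fin s), ‖r‖ ≤ δ →
      (⨅ π : Equiv.Perm (Fin n), Ebi e p q r π) -
        (⨅ π : Equiv.Perm (Fin n), Ebi e p q 0 π) ≤
        (2 / (n : ℝ)) * Real.sqrt (∑ i, ‖p i‖ ^ 2) * Real.sqrt (∑ i, ‖q i‖ ^ 2) *
          psi 2 δ := by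
  intro r hr
  classical
  have hn' : (0:ℝ) < (n:ℝ) := by exact_mod_cast hn
  set σP := Real.sqrt (∑ i, ‖p i‖ ^ 2) with hσP
  set σQ := Real.sqrt (∑ i, ‖q i‖ ^ 2) with hσQ
  set SPQ := σP * σQ with hSPQ
  have hSPQ0 : 0 ≤ SPQ := mul_nonneg (Real.sqrt_nonneg _) (Real.sqrt_nonneg _)
  -- the CLM associated to r' and the inner-product sums
  set B : (EuclideanSpace ℝ (Fin s)) → (EuclideanSpace ℝ (Fin d) →L[ℝ] EuclideanSpace ℝ (Fin d))
    := fun r' => toEuclideanCLM (𝕜 := ℝ) (bracket e r') with hB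
  set f : (EuclideanSpace ℝ (Fin s)) → ℝ
    := fun r' => ∑ i, (inner ℝ (NormedSpace.exp (B r') (p i)) (q (πstar i)) : ℝ) with hff
  have hq' : ∑ i, ‖q (πstar i)‖ ^ 2 = ∑ i, ‖q i‖ ^ 2 :=
    Equiv.sum_comp πstar (fun i => ‖q i‖ ^ 2)
  -- energy in terms of inner products
  have Ebi_eq : ∀ (r' : EuclideanSpace ℝ (Fin s)) (π : Equiv.Perm (Fin n)),
      Ebi e p q r' π = (1 / (n:ℝ)) * ((∑ i, ‖p i‖ ^ 2) + (∑ i, ‖q i‖ ^ 2))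
        - (2 / (n:ℝ)) * ∑ i, (inner ℝ (NormedSpace.exp (B r') (p i)) (q (π i)) : ℝ) := by
    intro r' π
    have hmv : ∀ i : Fin n, mulVecE (NormedSpace.exp (bracket e r')) (p i)
        = NormedSpace.exp (B r') (p i) := by
      intro i
      rw [hB, ← RQ.toCLM_exp]
      exact (DFunLike.congr_fun
        (coe_toEuclideanCLM_eq_toEuclideanLin (𝕜 := ℝ)
          (A := NormedSpace.exp (bracket e r'))) (p i)).symm
    have hiso : ∀ i : Fin n, ‖NormedSpace.exp (B r') (p i)‖ = ‖p i‖ := fun i =>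
      RQ.exp_skew_isometry (B r') (RQ.star_skew e r') (p i)
    have hterm : ∀ i : Fin n, ‖mulVecE (NormedSpace.exp (bracket e r')) (p i) - q (π i)‖ ^ 2
        = ‖p i‖ ^ 2 - 2 * (inner ℝ (NormedSpace.exp (B r') (p i)) (q (π i)) : ℝ)
          + ‖q (π i)‖ ^ 2 := by
      intro i
      rw [hmv i, norm_sub_sq_real, hiso i]
    unfold Ebi
    rw [Finset.sum_congr rfl (fun i _ => hterm i)]
    rw [Finset.sum_add_distrib, Finset.sum_sub_distrib, ← Finset.mul_sum,
      Equiv.sum_comp π (fun i => ‖q i‖ ^ 2)]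
    ring
  -- minimality in terms of f
  have hB0 : B (0 : EuclideanSpace ℝ (Fin s)) = 0 := by
    show toEuclideanCLM (𝕜 := ℝ) (bracket e 0) = 0
    rw [RQ.bracket_zero e, map_zero]
  have hf0 : f 0 = ∑ i, (inner ℝ (p i) (q (πstar i)) : ℝ) := by
    show (∑ i, (inner ℝ (NormedSpace.exp (B 0) (p i)) (q (πstar i)) : ℝ)) = _
    apply Finset.sum_congr rfl
    intro i _
    rw [hB0, NormedSpace.exp_zero]
    rfl
  have hfle : ∀ r' : EuclideanSpace ℝ (Fin s), f r' ≤ f 0 := by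
    intro r'
    have h := hmin r' πstar
    rw [Ebi_eq 0 πstar, Ebi_eq r' πstar] at h
    have h2 : (2 / (n:ℝ)) > 0 := by positivity
    have := sub_le_sub_left h ((1 / (n:ℝ)) * ((∑ i, ‖p i‖ ^ 2) + (∑ i, ‖q i‖ ^ 2)))
    simp only [sub_sub_cancel] at this
    -- this : -(2/n * f 0) ≤ ... careful; do directly
    nlinarith [h]
  -- Cauchy-Schwarz for the sums
  have hCS : ∑ i, ‖p i‖ * ‖q (πstar i)‖ ≤ SPQ := by
    have h := RQ.sum_mul_le_sqrt (fun i : Fin n => ‖p i‖) (fun i => ‖q (πstar i)‖)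
    rw [hq'] at h
    exact h
  -- remainder bound
  have hR : ∀ (C : EuclideanSpace ℝ (Fin d) →L[ℝ] EuclideanSpace ℝ (Fin d)),
      |∑ i, (inner ℝ ((NormedSpace.exp C - 1 - C) (p i)) (q (πstar i)) : ℝ)|
        ≤ (Real.exp ‖C‖ - 1 - ‖C‖) * SPQ := by
    intro C
    set D := NormedSpace.exp C - 1 - C with hD
    have hDn : ‖D‖ ≤ Real.exp ‖C‖ - 1 - ‖C‖ := RQ.exp_sub_one_sub_norm_le C
    calc |∑ i, (inner ℝ (D (p i)) (q (πstar i)) : ℝ)|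
        ≤ ∑ i, |(inner ℝ (D (p i)) (q (πstar i)) : ℝ)| := Finset.abs_sum_le_sum_abs _ _
      _ ≤ ∑ i, ‖D (p i)‖ * ‖q (πstar i)‖ :=
          Finset.sum_le_sum (fun i _ => abs_real_inner_le_norm _ _)
      _ ≤ ∑ i, ‖D‖ * (‖p i‖ * ‖q (πstar i)‖) := by
          apply Finset.sum_le_sum
          intro i _
          rw [← mul_assoc]
          exact mul_le_mul_of_nonneg_right (D.le_opNorm (p i)) (norm_nonneg _)
      _ = ‖D‖ * ∑ i, ‖p i‖ * ‖q (πstar i)‖ := by rw [Finset.mul_sum]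
      _ ≤ (Real.exp ‖C‖ - 1 - ‖C‖) * SPQ := by
          apply mul_le_mul hDn hCS
          · exact Finset.sum_nonneg (fun i _ => mul_nonneg (norm_nonneg _) (norm_nonneg _))
          · exact RQ.psi2_nonneg (norm_nonneg C)
  -- decomposition f r' - f 0 = L r' + R r'
  have hdec : ∀ r' : EuclideanSpace ℝ (Fin s),
      f r' - f 0 = (∑ i, (inner ℝ ((B r') (p i)) (q (πstar i)) : ℝ))
        + ∑ i, (inner ℝ ((NormedSpace.exp (B r') - 1 - (B r')) (p i)) (q (πstar i)) : ℝ) := by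
    intro r'
    rw [hf0, hff]
    rw [← Finset.sum_add_distrib, ← Finset.sum_sub_distrib]
    apply Finset.sum_congr rfl
    intro i _
    have happ : NormedSpace.exp (B r') (p i)
        = (NormedSpace.exp (B r') - 1 - (B r')) (p i) + p i + (B r') (p i) := by
      simp only [ContinuousLinearMap.sub_apply, ContinuousLinearMap.one_apply]
      abel
    rw [happ, inner_add_left, inner_add_left]
    ring
  -- the linear term vanishes
  set A := B r with hA
  set L := ∑ i, (inner ℝ (A (p i)) (q (πstar i)) : ℝ) with hL
  have hAδ : ‖A‖ ≤ δ := le_trans (RQ.opnorm_bracket e r) hr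
  have hBsmul : ∀ t : ℝ, B (t • r) = t • A := by
    intro t
    show toEuclideanCLM (𝕜 := ℝ) (bracket e (t • r)) = t • A
    rw [RQ.bracket_smul e t r]
    exact map_smul (toEuclideanCLM (𝕜 := ℝ)) t (bracket e r)
  have hLsmul : ∀ t : ℝ, (∑ i, (inner ℝ ((B (t • r)) (p i)) (q (πstar i)) : ℝ)) = t * L := by
    intro t
    rw [hBsmul t, hL, Finset.mul_sum]
    apply Finset.sum_congr rfl
    intro i _
    rw [ContinuousLinearMap.smul_apply, real_inner_smul_left]
  set K := ‖A‖ ^ 2 * SPQ with hK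
  have hK0 : 0 ≤ K := mul_nonneg (sq_nonneg _) hSPQ0
  have htK : ∀ t : ℝ, |t| ≤ (‖A‖ + 1)⁻¹ → t * L ≤ t ^ 2 * K := by
    intro t ht
    have h1 : f (t • r) - f 0 ≤ 0 := sub_nonpos.2 (hfle (t • r))
    rw [hdec (t • r), hLsmul t] at h1
    have h2 : t * L ≤ |∑ i, (inner ℝ ((NormedSpace.exp (B (t • r)) - 1 - (B (t • r))) (p i))
        (q (πstar i)) : ℝ)| := by
      have := neg_le_abs (∑ i, (inner ℝ ((NormedSpace.exp (B (t • r)) - 1 - (B (t • r))) (p i))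
        (q (πstar i)) : ℝ))
      linarith
    have h3 := hR (B (t • r))
    have hnorm : ‖B (t • r)‖ = |t| * ‖A‖ := by
      rw [hBsmul t, show ‖t • A‖ = ‖t‖ * ‖A‖ from norm_smul t A, Real.norm_eq_abs]
    have hsmall : ‖B (t • r)‖ ≤ 1 := by
      rw [hnorm]
      rcases le_or_gt ‖A‖ 0 with h | h
      · have : ‖A‖ = 0 := le_antisymm h (norm_nonneg _)
        rw [this]; simp
      · have h4 : |t| * ‖A‖ ≤ (‖A‖ + 1)⁻¹ * ‖A‖ :=
          mul_le_mul_of_nonneg_right ht (norm_nonneg _)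
        have h5 : (‖A‖ + 1)⁻¹ * ‖A‖ ≤ 1 := by
          rw [inv_mul_le_iff₀ (by linarith)]
          linarith
        linarith
    have h6 : Real.exp ‖B (t • r)‖ - 1 - ‖B (t • r)‖ ≤ ‖B (t • r)‖ ^ 2 :=
      RQ.psi2_le_sq (norm_nonneg _) hsmall
    have h7 : ‖B (t • r)‖ ^ 2 = t ^ 2 * ‖A‖ ^ 2 := by
      rw [hnorm]; rw [mul_pow, sq_abs]
    calc t * L ≤ |∑ i, (inner ℝ ((NormedSpace.exp (B (t • r)) - 1 - (B (t • r))) (p i))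
          (q (πstar i)) : ℝ)| := h2
      _ ≤ (Real.exp ‖B (t • r)‖ - 1 - ‖B (t • r)‖) * SPQ := h3
      _ ≤ ‖B (t • r)‖ ^ 2 * SPQ := mul_le_mul_of_nonneg_right h6 hSPQ0
      _ = t ^ 2 * K := by rw [h7, hK]; ring
  have hL0 : L = 0 := by
    by_contra hL0
    have habs : 0 < |L| := abs_pos.2 hL0
    set t0 := min (‖A‖ + 1)⁻¹ (|L| / (2 * (K + 1))) with ht0
    have ht0pos : 0 < t0 := lt_min (by positivity) (by positivity)
    have ht0le : |t0| ≤ (‖A‖ + 1)⁻¹ := by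
      rw [abs_of_pos ht0pos]; exact min_le_left _ _
    have h1 := htK t0 ht0le
    have h2 := htK (-t0) (by rw [abs_neg]; exact ht0le)
    have h3 : |L| * t0 ≤ t0 ^ 2 * K := by
      rcases le_or_gt 0 L with h | h
      · rw [abs_of_nonneg h]; nlinarith
      · rw [abs_of_neg h]; nlinarith
    have h4 : |L| ≤ t0 * K := by
      have := (mul_le_mul_iff_left₀ ht0pos).1 (by nlinarith : |L| * t0 ≤ (t0 * K) * t0)
      exact this
    have h5 : t0 ≤ |L| / (2 * (K + 1)) := min_le_right _ _
    have h6 : t0 * K ≤ |L| / (2 * (K + 1)) * K := mul_le_mul_of_nonneg_right h5 hK0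
    have h7 : |L| / (2 * (K + 1)) * K < |L| := by
      rw [div_mul_eq_mul_div, div_lt_iff₀ (by positivity)]
      nlinarith
    linarith
  -- putting it together
  have hstep1 : (⨅ π : Equiv.Perm (Fin n), Ebi e p q 0 π) = Ebi e p q 0 πstar := by
    apply le_antisymm
    · exact ciInf_le (Finite.bddBelow_range _) πstar
    · exact le_ciInf (fun π => hmin 0 π)
  have hstep2 : (⨅ π : Equiv.Perm (Fin n), Ebi e p q r π) ≤ Ebi e p q r πstar :=
    ciInf_le (Finite.bddBelow_range _) πstar
  have hdiff : (⨅ π : Equiv.Perm (Fin n), Ebi e p q r π) -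
      (⨅ π : Equiv.Perm (Fin n), Ebi e p q 0 π) ≤ (2 / (n:ℝ)) * (f 0 - f r) := by
    rw [hstep1]
    have : Ebi e p q r πstar - Ebi e p q 0 πstar = (2 / (n:ℝ)) * (f 0 - f r) := by
      rw [Ebi_eq r πstar, Ebi_eq 0 πstar, hff]
      ring
    linarith
  have hfr : f 0 - f r ≤ (Real.exp δ - 1 - δ) * SPQ := by
    have h1 : f r - f 0 = L + ∑ i, (inner ℝ ((NormedSpace.exp A - 1 - A) (p i))
        (q (πstar i)) : ℝ) := hdec r
    have h2 := hR A
    have h3 : Real.exp ‖A‖ - 1 - ‖A‖ ≤ Real.exp δ - 1 - δ :=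
      RQ.psi2_mono (norm_nonneg A) hAδ
    have h4 := neg_le_abs (∑ i, (inner ℝ ((NormedSpace.exp A - 1 - A) (p i))
        (q (πstar i)) : ℝ))
    have h5 : (Real.exp ‖A‖ - 1 - ‖A‖) * SPQ ≤ (Real.exp δ - 1 - δ) * SPQ :=
      mul_le_mul_of_nonneg_right h3 hSPQ0
    rw [hL0] at h1
    linarith
  have hpsi : psi 2 δ = Real.exp δ - 1 - δ := by
    simp [psi, Finset.sum_range_succ, Nat.factorial]
    ring
  calc (⨅ π : Equiv.Perm (Fin n), Ebi e p q r π) -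
      (⨅ π : Equiv.Perm (Fin n), Ebi e p q 0 π)
      ≤ (2 / (n:ℝ)) * (f 0 - f r) := hdiff
    _ ≤ (2 / (n:ℝ)) * ((Real.exp δ - 1 - δ) * SPQ) :=
        mul_le_mul_of_nonneg_left hfr (by positivity)
    _ = (2 / (n:ℝ)) * σP * σQ * psi 2 δ := by rw [hpsi, hSPQ]; ring
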